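/- Let P, Q be rank-k orthogonal projections in M_n(ℂ) and θ₁, θ₂ ∈ ℝ. Then span_ℝ(e^{iθ₁}S(P)) = span_ℝ(e^{iθ₂}S(Q)) if and only if P = Q and θ₁ ≡ θ₂ (mod π). -/

import Mathlib

open Matrix

/-- `P` is an orthogonal projection of rank `k`. -/
def IsProjOfRank {m : Type*} [Fintype m] [DecidableEq m]
    (P : Matrix m m ℂ) (k : ℕ) : Prop :=
  P * P = P ∧ Pᴴ = P ∧ P.rank = k

/-- The `k`-numerical range `W_k(A) = { tr (A P) : P an orthogonal projection of rank k }`. -/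
def WK {m : Type*} [Fintype m] [DecidableEq m] (k : ℕ) (A : Matrix m m ℂ) : Set ℂ :=
  {z | ∃ P : Matrix m m ℂ, IsProjOfRank P k ∧ z = (A * P).trace}

/-- The `k`-numerical radius `w_k(A) = max { |tr (A P)| : P a rank-k orthogonal projection }`. -/
noncomputable def wk {m : Type*} [Fintype m] [DecidableEq m] (k : ℕ) (A : Matrix m m ℂ) : ℝ :=
  sSup {r : ℝ | ∃ P : Matrix m m ℂ, IsProjOfRank P k ∧ r = ‖(A * P).trace‖}

/-- `A` and `B` are parallel with respect to the `k`-numerical radius. -/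
noncomputable def ParallelWk {m : Type*} [Fintype m] [DecidableEq m]
    (k : ℕ) (A B : Matrix m m ℂ) : Prop :=
  ∃ μ : ℂ, ‖μ‖ = 1 ∧ wk k (A + μ • B) = wk k A + wk k B

/-- Sum of the `k` largest eigenvalues of a Hermitian matrix (`0` if not Hermitian). -/
noncomputable def sumKLargest {m : Type*} [Fintype m] [DecidableEq m]
    (k : ℕ) (A : Matrix m m ℂ) : ℝ :=
  if h : A.IsHermitian then
    sSup {r : ℝ | ∃ s : Finset m, s.card = k ∧ r = ∑ i ∈ s, h.eigenvalues i}
  else 0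

/-- Sum of the `k` smallest eigenvalues of a Hermitian matrix (`0` if not Hermitian). -/
noncomputable def sumKSmallest {m : Type*} [Fintype m] [DecidableEq m]
    (k : ℕ) (A : Matrix m m ℂ) : ℝ :=
  if h : A.IsHermitian then
    sInf {r : ℝ | ∃ s : Finset m, s.card = k ∧ r = ∑ i ∈ s, h.eigenvalues i}
  else 0

section Auxiliary

set_option linter.unusedSectionVars false

variable {m : Type*} [Fintype m] [DecidableEq m] {k : ℕ}

lemma trace_ct_mul_self (M : Matrix m m ℂ) :
    (Mᴴ * M).trace = ((∑ j, ∑ i, Complex.normSq (M i j) : ℝ) : ℂ) := by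
  rw [Matrix.trace]
  push_cast
  refine Finset.sum_congr rfl fun j _ => ?_
  simp [Matrix.mul_apply, Matrix.diag, Matrix.conjTranspose_apply, Complex.normSq_eq_conj_mul_self]

lemma ct_mul_self_eq_zero {M : Matrix m m ℂ} (h : (Mᴴ * M).trace = 0) : M = 0 := by
  rw [trace_ct_mul_self] at h
  have h' : (∑ j, ∑ i, Complex.normSq (M i j) : ℝ) = 0 := by exact_mod_cast h
  ext i j
  have hnn : ∀ j ∈ Finset.univ, (0:ℝ) ≤ ∑ i, Complex.normSq (M i j) :=
    fun j _ => Finset.sum_nonneg fun i _ => Complex.normSq_nonneg _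
  have := (Finset.sum_eq_zero_iff_of_nonneg hnn).1 h' j (Finset.mem_univ j)
  have := (Finset.sum_eq_zero_iff_of_nonneg (fun i _ => Complex.normSq_nonneg (M i j))).1 this i
    (Finset.mem_univ i)
  simpa using Complex.normSq_eq_zero.1 this

lemma proj_mul_trace_key {S T : Matrix m m ℂ} (hS2 : S * S = S) (hSH : Sᴴ = S)
    (hT2 : T * T = T) (hTH : Tᴴ = T) :
    (S * T).trace = (((S*T)ᴴ * (S*T)).trace) := by
  have : (S*T)ᴴ * (S*T) = T * S * T := by
    rw [Matrix.conjTranspose_mul, hSH, hTH]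
    calc T * S * (S * T) = T * (S * S) * T := by noncomm_ring
    _ = T * S * T := by rw [hS2]
  rw [this, Matrix.trace_mul_cycle, hT2, Matrix.trace_mul_comm]

lemma proj_mul_trace_real {S T : Matrix m m ℂ} (hS2 : S * S = S) (hSH : Sᴴ = S)
    (hT2 : T * T = T) (hTH : Tᴴ = T) :
    (S * T).trace = (((S * T).trace.re : ℝ) : ℂ) ∧ 0 ≤ (S * T).trace.re := by
  have h := proj_mul_trace_key hS2 hSH hT2 hTH
  rw [trace_ct_mul_self] at h
  constructor
  · rw [h]; simp
  · rw [h]; simp only [Complex.ofReal_re]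
    exact Finset.sum_nonneg fun j _ => Finset.sum_nonneg fun i _ => Complex.normSq_nonneg _

lemma proj_mul_eq_zero_of_trace {S T : Matrix m m ℂ} (hS2 : S * S = S) (hSH : Sᴴ = S)
    (hT2 : T * T = T) (hTH : Tᴴ = T) (h : (S * T).trace = 0) : S * T = 0 := by
  have hkey := proj_mul_trace_key hS2 hSH hT2 hTH
  exact ct_mul_self_eq_zero (by rw [← hkey, h])

lemma one_sub_proj {S : Matrix m m ℂ} (hS2 : S * S = S) (hSH : Sᴴ = S) :
    (1 - S) * (1 - S) = (1 - S) ∧ (1 - S)ᴴ = (1 - S) := by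
  constructor
  · rw [Matrix.sub_mul, Matrix.mul_sub, Matrix.mul_sub, hS2]; noncomm_ring
  · rw [Matrix.conjTranspose_sub, hSH, Matrix.conjTranspose_one]

lemma proj_eigs_01 {P : Matrix m m ℂ} (h2 : P * P = P) (hH : P.IsHermitian) (i : m) :
    hH.eigenvalues i = 0 ∨ hH.eigenvalues i = 1 := by
  have hv := hH.mulVec_eigenvectorBasis i
  have hv2 : (P * P) *ᵥ ⇑(hH.eigenvectorBasis i) =
      (hH.eigenvalues i * hH.eigenvalues i) • ⇑(hH.eigenvectorBasis i) := by
    rw [← Matrix.mulVec_mulVec, hv, Matrix.mulVec_smul, hv, smul_smul]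
  rw [h2, hv] at hv2
  have hvne : ⇑(hH.eigenvectorBasis i) ≠ 0 := by
    intro h0
    have hb0 : hH.eigenvectorBasis i = 0 := (WithLp.ofLp_eq_zero 2).1 h0
    have := hH.eigenvectorBasis.orthonormal.1 i
    rw [hb0] at this
    simp at this
  have : (hH.eigenvalues i * hH.eigenvalues i - hH.eigenvalues i) • ⇑(hH.eigenvectorBasis i) = 0 := by
    rw [sub_smul, hv2, sub_self]
  rcases smul_eq_zero.1 this with h | h
  · have : hH.eigenvalues i * (hH.eigenvalues i - 1) = 0 := by ring_nf; linarith [h]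
    rcases mul_eq_zero.1 this with h | h
    · exact Or.inl h
    · exact Or.inr (by linarith)
  · exact absurd h hvne

lemma trace_eq_sum_eigs {P : Matrix m m ℂ} (hH : P.IsHermitian) :
    P.trace = ∑ i, (hH.eigenvalues i : ℂ) := by
  conv_lhs => rw [hH.spectral_theorem]
  rw [Unitary.conjStarAlgAut_apply, Matrix.trace_mul_cycle]
  have hU : star (hH.eigenvectorUnitary : Matrix m m ℂ) * (hH.eigenvectorUnitary : Matrix m m ℂ)
      = 1 := Matrix.UnitaryGroup.star_mul_self _
  rw [hU, Matrix.one_mul, Matrix.trace_diagonal]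
  rfl

lemma trace_proj_eq_rank {P : Matrix m m ℂ} (h2 : P * P = P) (hH : Pᴴ = P) :
    P.trace = (P.rank : ℂ) := by
  classical
  have hherm : P.IsHermitian := hH
  rw [trace_eq_sum_eigs hherm, hherm.rank_eq_card_non_zero_eigs, Fintype.card_subtype]
  calc ∑ i, (hherm.eigenvalues i : ℂ)
      = ∑ i ∈ Finset.univ.filter (fun i => (hherm.eigenvalues i : ℂ) ≠ 0),
          (hherm.eigenvalues i : ℂ) := (Finset.sum_filter_ne_zero _).symm
    _ = ∑ _i ∈ Finset.univ.filter (fun i => (hherm.eigenvalues i : ℂ) ≠ 0), (1:ℂ) := by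
        refine Finset.sum_congr rfl fun i hi => ?_
        rcases proj_eigs_01 h2 hherm i with h | h
        · rw [Finset.mem_filter] at hi
          exfalso; exact hi.2 (by rw [h]; simp)
        · rw [h]; simp
    _ = ((Finset.univ.filter (fun i => (hherm.eigenvalues i : ℂ) ≠ 0)).card : ℂ) := by
        rw [Finset.sum_const, nsmul_eq_mul, mul_one]
    _ = ((Finset.univ.filter (fun i => hherm.eigenvalues i ≠ 0)).card : ℂ) := by
        have hfil : Finset.univ.filter (fun i => (hherm.eigenvalues i : ℂ) ≠ 0)
            = Finset.univ.filter (fun i => hherm.eigenvalues i ≠ 0) :=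
          Finset.filter_congr (fun i _ => by simp)
        rw [hfil]

lemma IsProjOfRank.trace_eq {P : Matrix m m ℂ} (h : IsProjOfRank P k) : P.trace = (k : ℂ) := by
  rw [trace_proj_eq_rank h.1 h.2.1, h.2.2]

lemma proj_trace_bounds {S P' : Matrix m m ℂ} (hS2 : S * S = S) (hSH : Sᴴ = S)
    (hP' : IsProjOfRank P' k) :
    (S * P').trace = (((S * P').trace.re : ℝ) : ℂ) ∧ 0 ≤ (S * P').trace.re ∧
      (S * P').trace.re ≤ k := by
  obtain ⟨hre, hnn⟩ := proj_mul_trace_real hS2 hSH hP'.1 hP'.2.1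
  refine ⟨hre, hnn, ?_⟩
  obtain ⟨hre', hnn'⟩ := proj_mul_trace_real (one_sub_proj hS2 hSH).1 (one_sub_proj hS2 hSH).2
    hP'.1 hP'.2.1
  have hsplit : (S * P').trace + ((1 - S) * P').trace = (k : ℂ) := by
    rw [← Matrix.trace_add, ← Matrix.add_mul]
    simp only [add_sub_cancel, Matrix.one_mul]
    exact hP'.trace_eq
  have := congrArg Complex.re hsplit
  simp only [Complex.add_re, Complex.natCast_re] at this
  linarith

lemma wk_eq_of_isGreatest {B : Matrix m m ℂ} {u : ℝ}
    (hub : ∀ P' : Matrix m m ℂ, IsProjOfRank P' k → ‖(B * P').trace‖ ≤ u)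
    (hmem : ∃ P' : Matrix m m ℂ, IsProjOfRank P' k ∧ u = ‖(B * P').trace‖) :
    wk k B = u := by
  apply IsGreatest.csSup_eq
  constructor
  · exact hmem
  · rintro r ⟨P', hP', rfl⟩
    exact hub P' hP'

/-- Certificate 1 : B = Q + εi(1-Q) belongs to S(Q), for ε² ≤ 1. -/
lemma cert1 {Q : Matrix m m ℂ} (hQ : IsProjOfRank Q k) (ε : ℝ) (hε : ε^2 ≤ 1) :
    ((Q + ((ε : ℂ) * Complex.I) • (1 - Q)) * Q).trace
      = ((wk k (Q + ((ε : ℂ) * Complex.I) • (1 - Q)) : ℝ) : ℂ) := by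
  set B := Q + ((ε : ℂ) * Complex.I) • (1 - Q) with hB
  have hBQ : B * Q = Q := by
    rw [hB, Matrix.add_mul, Matrix.smul_mul, Matrix.sub_mul, Matrix.one_mul, hQ.1, sub_self,
      smul_zero, add_zero]
  have htr : (B * Q).trace = (k : ℂ) := by rw [hBQ, hQ.trace_eq]
  have hwk : wk k B = k := by
    apply wk_eq_of_isGreatest
    · intro P' hP'
      have hQP := proj_trace_bounds hQ.1 hQ.2.1 hP'
      have hRP := proj_trace_bounds (one_sub_proj hQ.1 hQ.2.1).1 (one_sub_proj hQ.1 hQ.2.1).2 hP'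
      set x := (Q * P').trace.re
      set y := ((1 - Q) * P').trace.re
      have hxy : x + y = k := by
        have hsplit : (Q * P').trace + ((1 - Q) * P').trace = (k : ℂ) := by
          rw [← Matrix.trace_add, ← Matrix.add_mul]
          simp only [add_sub_cancel, Matrix.one_mul]
          exact hP'.trace_eq
        have := congrArg Complex.re hsplit
        simpa using this
      have hexp : (B * P').trace = (x : ℂ) + ((ε : ℂ) * Complex.I) * (y : ℂ) := by
        rw [hB, Matrix.add_mul, Matrix.trace_add, Matrix.smul_mul, Matrix.trace_smul,
          smul_eq_mul, ← hQP.1, ← hRP.1]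
      rw [hexp]
      have habs : ‖(x : ℂ) + ((ε : ℂ) * Complex.I) * (y : ℂ)‖
          = Real.sqrt (x^2 + ε^2 * y^2) := by
        rw [Complex.norm_def, Complex.normSq_apply]
        congr 1
        simp [Complex.add_re, Complex.add_im, Complex.mul_re, Complex.mul_im]
        ring
      rw [habs]
      have hk0 : (0:ℝ) ≤ k := Nat.cast_nonneg k
      have : x^2 + ε^2 * y^2 ≤ (k : ℝ)^2 := by nlinarith [hQP.2.1, hRP.2.1, hQP.2.2]
      calc Real.sqrt (x^2 + ε^2*y^2) ≤ Real.sqrt ((k:ℝ)^2) := Real.sqrt_le_sqrt this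
        _ = k := Real.sqrt_sq hk0
    · exact ⟨Q, hQ, by rw [htr]; simp⟩
  rw [htr, hwk]; norm_cast

/-- Certificate 2 : B = 2Q - P belongs to S(Q) when tr(PQ) = 0. -/
lemma cert2 {P Q : Matrix m m ℂ} (hP : IsProjOfRank P k) (hQ : IsProjOfRank Q k)
    (h0 : (P * Q).trace = 0) :
    (((2 : ℂ) • Q - P) * Q).trace = ((wk k ((2 : ℂ) • Q - P) : ℝ) : ℂ) := by
  set B := (2 : ℂ) • Q - P with hB
  have htr : (B * Q).trace = ((2 * k : ℝ) : ℂ) := by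
    rw [hB, Matrix.sub_mul, Matrix.trace_sub, Matrix.smul_mul, Matrix.trace_smul, hQ.1, h0,
      hQ.trace_eq, sub_zero, smul_eq_mul]
    push_cast; ring
  have hwk : wk k B = 2 * k := by
    apply wk_eq_of_isGreatest
    · intro P' hP'
      have hQP := proj_trace_bounds hQ.1 hQ.2.1 hP'
      have hPP := proj_trace_bounds hP.1 hP.2.1 hP'
      set x := (Q * P').trace.re
      set d := (P * P').trace.re
      have hexp : (B * P').trace = (((2 * x - d : ℝ)) : ℂ) := by
        rw [hB, Matrix.sub_mul, Matrix.trace_sub, Matrix.smul_mul, Matrix.trace_smul, smul_eq_mul]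
        rw [hQP.1, hPP.1]
        push_cast; ring
      rw [hexp, Complex.norm_real, Real.norm_eq_abs]
      have hk0 : (0:ℝ) ≤ k := Nat.cast_nonneg k
      rw [abs_le]
      constructor
      · nlinarith [hQP.2.1, hPP.2.1, hPP.2.2]
      · nlinarith [hQP.2.1, hQP.2.2, hPP.2.1]
    · refine ⟨Q, hQ, ?_⟩
      rw [htr, Complex.norm_real, Real.norm_eq_abs, _root_.abs_of_nonneg (by positivity)]
  rw [htr, hwk]

/-- The real subspace {X | Im(e^{-iθ} tr(XP)) = 0}. -/
noncomputable def KSub (θ : ℝ) (P : Matrix m m ℂ) : Submodule ℝ (Matrix m m ℂ) where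
  carrier := {X | (Complex.exp (-(θ : ℂ) * Complex.I) * (X * P).trace).im = 0}
  add_mem' := by
    intro a b ha hb
    simp only [Set.mem_setOf_eq] at *
    rw [Matrix.add_mul, Matrix.trace_add, mul_add, Complex.add_im, ha, hb, add_zero]
  zero_mem' := by
    simp only [Set.mem_setOf_eq, Matrix.zero_mul, Matrix.trace_zero, mul_zero, Complex.zero_im]
  smul_mem' := by
    intro r x hx
    simp only [Set.mem_setOf_eq] at *
    rw [Matrix.smul_mul, Matrix.trace_smul, Complex.real_smul, mul_left_comm, Complex.mul_im,
      Complex.ofReal_re, Complex.ofReal_im, hx, mul_zero, zero_mul, add_zero]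

lemma mem_KSub_iff (θ : ℝ) (P X : Matrix m m ℂ) :
    X ∈ KSub θ P ↔ (Complex.exp (-(θ : ℂ) * Complex.I) * (X * P).trace).im = 0 := Iff.rfl

lemma span_S_le_KSub (θ : ℝ) (P : Matrix m m ℂ) (k : ℕ) :
    Submodule.span ℝ ((fun B => Complex.exp (θ * Complex.I) • B) ''
      {B : Matrix m m ℂ | (B * P).trace = ((wk k B : ℝ) : ℂ)}) ≤ KSub θ P := by
  rw [Submodule.span_le]
  rintro X ⟨B, hB, rfl⟩
  rw [SetLike.mem_coe, mem_KSub_iff, Matrix.smul_mul, Matrix.trace_smul, smul_eq_mul,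
    ← mul_assoc, ← Complex.exp_add, hB]
  norm_num

lemma exp_mul_im (c : ℝ) (t : ℂ) :
    (Complex.exp ((c : ℂ) * Complex.I) * t).im = Real.cos c * t.im + Real.sin c * t.re := by
  rw [Complex.exp_mul_I, add_mul, Complex.add_im, Complex.mul_im, Complex.mul_im]
  simp [Complex.cos_ofReal_re, Complex.sin_ofReal_re, Complex.mul_im, Complex.I_re, Complex.I_im]

lemma pair_condition {θ₁ θ₂ : ℝ} {P Q : Matrix m m ℂ} {k : ℕ}
    (h : Submodule.span ℝ ((fun B => Complex.exp (θ₁ * Complex.I) • B) ''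
          {B : Matrix m m ℂ | (B * P).trace = ((wk k B : ℝ) : ℂ)})
      = Submodule.span ℝ ((fun B => Complex.exp (θ₂ * Complex.I) • B) ''
          {B : Matrix m m ℂ | (B * Q).trace = ((wk k B : ℝ) : ℂ)}))
    {B : Matrix m m ℂ} (hB : (B * Q).trace = ((wk k B : ℝ) : ℂ)) :
    (Complex.exp (((θ₂ - θ₁ : ℝ) : ℂ) * Complex.I) * (B * P).trace).im = 0 := by
  have hX : Complex.exp (θ₂ * Complex.I) • B ∈
      Submodule.span ℝ ((fun B => Complex.exp (θ₂ * Complex.I) • B) ''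
        {B : Matrix m m ℂ | (B * Q).trace = ((wk k B : ℝ) : ℂ)}) :=
    Submodule.subset_span ⟨B, hB, rfl⟩
  rw [← h] at hX
  have h2 := span_S_le_KSub θ₁ P k hX
  rw [mem_KSub_iff, Matrix.smul_mul, Matrix.trace_smul, smul_eq_mul, ← mul_assoc,
    ← Complex.exp_add] at h2
  convert h2 using 4
  push_cast; ring

end Auxiliary

/-- `span_ℝ(e^{iθ₁} S(P)) = span_ℝ(e^{iθ₂} S(Q))` iff `P = Q` and
`θ₁ ≡ θ₂ (mod π)`. -/
theorem stmt_13 (n k : ℕ) (hk : 1 ≤ k) (hkn : k < n)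
    (P Q : Matrix (Fin n) (Fin n) ℂ) (hP : IsProjOfRank P k) (hQ : IsProjOfRank Q k)
    (θ₁ θ₂ : ℝ) :
    Submodule.span ℝ
        ((fun B => Complex.exp (θ₁ * Complex.I) • B) ''
          {B : Matrix (Fin n) (Fin n) ℂ | (B * P).trace = (wk k B : ℂ)})
      = Submodule.span ℝ
        ((fun B => Complex.exp (θ₂ * Complex.I) • B) ''
          {B : Matrix (Fin n) (Fin n) ℂ | (B * Q).trace = (wk k B : ℂ)})
    ↔ (P = Q ∧ ∃ m : ℤ, θ₁ = θ₂ + m * Real.pi) := by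
  constructor
  · intro h
    obtain ⟨haeq, -⟩ := proj_mul_trace_real hQ.1 hQ.2.1 hP.1 hP.2.1
    set a := (Q * P).trace.re with ha
    obtain ⟨hbeq, -⟩ := proj_mul_trace_real (one_sub_proj hQ.1 hQ.2.1).1
      (one_sub_proj hQ.1 hQ.2.1).2 hP.1 hP.2.1
    set b := ((1 - Q) * P).trace.re with hb
    obtain ⟨hb'eq, -⟩ := proj_mul_trace_real (one_sub_proj hP.1 hP.2.1).1
      (one_sub_proj hP.1 hP.2.1).2 hQ.1 hQ.2.1
    set b' := ((1 - P) * Q).trace.re with hb'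
    obtain ⟨ha'eq, -⟩ := proj_mul_trace_real hP.1 hP.2.1 hQ.1 hQ.2.1
    have cond : ∀ ε : ℝ, ε ^ 2 ≤ 1 →
        Real.cos (θ₂ - θ₁) * (ε * b) + Real.sin (θ₂ - θ₁) * a = 0 := by
      intro ε hε
      have hc := pair_condition h (cert1 hQ ε hε)
      have htrB : ((Q + ((ε : ℂ) * Complex.I) • (1 - Q)) * P).trace
          = (a : ℂ) + ((ε : ℂ) * Complex.I) * (b : ℂ) := by
        rw [Matrix.add_mul, Matrix.trace_add, Matrix.smul_mul, Matrix.trace_smul, smul_eq_mul,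
          haeq, hbeq]
      rw [htrB, exp_mul_im] at hc
      simpa [Complex.add_im, Complex.add_re, Complex.mul_im, Complex.mul_re,
        mul_comm, mul_assoc, mul_left_comm] using hc
    have h1 := cond 1 (by norm_num)
    have h2 := cond (-1) (by norm_num)
    have hsa : Real.sin (θ₂ - θ₁) * a = 0 := by linarith
    have hcb : Real.cos (θ₂ - θ₁) * b = 0 := by linarith
    have cond' : ∀ ε : ℝ, ε ^ 2 ≤ 1 →
        Real.cos (θ₁ - θ₂) * (ε * b') + Real.sin (θ₁ - θ₂) * (P * Q).trace.re = 0 := by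
      intro ε hε
      have hc := pair_condition h.symm (cert1 hP ε hε)
      have htrB : ((P + ((ε : ℂ) * Complex.I) • (1 - P)) * Q).trace
          = ((P * Q).trace.re : ℂ) + ((ε : ℂ) * Complex.I) * (b' : ℂ) := by
        rw [Matrix.add_mul, Matrix.trace_add, Matrix.smul_mul, Matrix.trace_smul, smul_eq_mul,
          ha'eq, hb'eq, Complex.ofReal_re]
      rw [htrB, exp_mul_im] at hc
      simpa [Complex.add_im, Complex.add_re, Complex.mul_im, Complex.mul_re,
        mul_comm, mul_assoc, mul_left_comm] using hc
    have h1' := cond' 1 (by norm_num)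
    have h2' := cond' (-1) (by norm_num)
    have hcb' : Real.cos (θ₁ - θ₂) * b' = 0 := by linarith
    rw [show θ₁ - θ₂ = -(θ₂ - θ₁) by ring, Real.cos_neg] at hcb'
    by_cases hcos : Real.cos (θ₂ - θ₁) = 0
    · exfalso
      have hsin : Real.sin (θ₂ - θ₁) ≠ 0 := by
        intro h0
        have := Real.sin_sq_add_cos_sq (θ₂ - θ₁)
        rw [h0, hcos] at this; norm_num at this
      have ha0 : a = 0 := by
        rcases mul_eq_zero.1 hsa with h' | h'
        · exact absurd h' hsin
        · exact h'
      have hQP0 : (Q * P).trace = 0 := by rw [haeq, ha0]; norm_num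
      have hPQ0 : (P * Q).trace = 0 := by rw [Matrix.trace_mul_comm]; exact hQP0
      have hc2 := pair_condition h (cert2 hP hQ hPQ0)
      have htrB2 : (((2:ℂ) • Q - P) * P).trace = ((-(k:ℝ) : ℝ) : ℂ) := by
        rw [Matrix.sub_mul, Matrix.trace_sub, Matrix.smul_mul, Matrix.trace_smul, smul_eq_mul,
          hQP0, hP.1, hP.trace_eq]
        push_cast; ring
      rw [htrB2, exp_mul_im] at hc2
      simp only [Complex.ofReal_im, Complex.ofReal_re, mul_zero, zero_add] at hc2
      have hkpos : (0:ℝ) < k := by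
        have : (1:ℝ) ≤ k := by exact_mod_cast hk
        linarith
      rcases mul_eq_zero.1 hc2 with h' | h'
      · exact hsin h'
      · linarith
    · have hb0 : b = 0 := by
        rcases mul_eq_zero.1 hcb with h' | h'
        · exact absurd h' hcos
        · exact h'
      have hb'0 : b' = 0 := by
        rcases mul_eq_zero.1 hcb' with h' | h'
        · exact absurd h' hcos
        · exact h'
      have e1 : (1 - Q) * P = 0 :=
        proj_mul_eq_zero_of_trace (one_sub_proj hQ.1 hQ.2.1).1 (one_sub_proj hQ.1 hQ.2.1).2
          hP.1 hP.2.1 (by rw [hbeq, hb0]; norm_num)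
      have e2 : (1 - P) * Q = 0 :=
        proj_mul_eq_zero_of_trace (one_sub_proj hP.1 hP.2.1).1 (one_sub_proj hP.1 hP.2.1).2
          hQ.1 hQ.2.1 (by rw [hb'eq, hb'0]; norm_num)
      rw [Matrix.sub_mul, Matrix.one_mul, sub_eq_zero] at e1 e2
      have hPeqQ : P = Q := by
        calc P = Pᴴ := hP.2.1.symm
          _ = (Q * P)ᴴ := by rw [← e1]
          _ = Pᴴ * Qᴴ := Matrix.conjTranspose_mul _ _
          _ = P * Q := by rw [hP.2.1, hQ.2.1]
          _ = Q := e2.symm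
      refine ⟨hPeqQ, ?_⟩
      have hak : a = k := by
        have htr : (Q * P).trace = (k : ℂ) := by rw [← e1, hP.trace_eq]
        have := congrArg Complex.re htr
        simpa [ha] using this
      have hsin0 : Real.sin (θ₂ - θ₁) = 0 := by
        rcases mul_eq_zero.1 hsa with h' | h'
        · exact h'
        · exfalso
          rw [hak] at h'
          have : (1:ℝ) ≤ k := by exact_mod_cast hk
          rw [h'] at this; norm_num at this
      rcases Real.sin_eq_zero_iff.1 hsin0 with ⟨mm, hmm⟩
      exact ⟨-mm, by push_cast; linarith⟩
  · rintro ⟨rfl, mm, hm⟩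
    have key : Complex.exp (θ₁ * Complex.I) = Complex.exp (θ₂ * Complex.I)
        ∨ Complex.exp (θ₁ * Complex.I) = -Complex.exp (θ₂ * Complex.I) := by
      have hsplit : (θ₁ : ℂ) * Complex.I
          = (θ₂ : ℂ) * Complex.I + (mm : ℂ) * ((Real.pi : ℂ) * Complex.I) := by
        rw [hm]; push_cast; ring
      rw [hsplit, Complex.exp_add, Complex.exp_int_mul, Complex.exp_pi_mul_I]
      rcases Int.even_or_odd mm with he | ho
      · left; rw [he.neg_one_zpow, mul_one]
      · right; rw [ho.neg_one_zpow, mul_neg_one]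
    rcases key with he | he
    · rw [he]
    · rw [he]
      have himg : (fun B : Matrix (Fin n) (Fin n) ℂ => (-Complex.exp (θ₂ * Complex.I)) • B) ''
            {B : Matrix (Fin n) (Fin n) ℂ | (B * P).trace = (wk k B : ℂ)}
          = -((fun B : Matrix (Fin n) (Fin n) ℂ => Complex.exp (θ₂ * Complex.I) • B) ''
            {B : Matrix (Fin n) (Fin n) ℂ | (B * P).trace = (wk k B : ℂ)}) := by
        ext X
        simp only [Set.mem_image, Set.mem_neg, Set.mem_setOf_eq]
        constructor
        · rintro ⟨B, hB, rfl⟩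
          exact ⟨B, hB, by rw [neg_smul, neg_neg]⟩
        · rintro ⟨B, hB, hX⟩
          exact ⟨B, hB, by rw [neg_smul, hX, neg_neg]⟩
      rw [himg, Submodule.span_neg]
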